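/- In the setting of an elliptic basis: with Φ the q-Frobenius automorphism of the algebraic closure of 𝔽_q, for k ≢ 0, 1 mod d one has Φ(ω_k) = ω_{k-1} - ω_{-1} + Γ_{-1,k-1}, and furthermore Φ(ω₁) = -ω_{-1} - a₁ and Φ(ω₀) = ω₀, where Γ_{k,l} = Γ(O, kt, lt) ∈ 𝔽_q. -/

import Mathlib

noncomputable section
namespace EllipticPeriods

variable {F : Type*} [Field F]

/-- x-coordinate of an affine point, with junk value 0 at the point at infinity. -/
def xc {W : WeierstrassCurve.Affine F} : W.Point → F
  | .zero => 0
  | @WeierstrassCurve.Affine.Point.some _ _ _ x _ _ => x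

/-- y-coordinate of an affine point, with junk value 0 at the point at infinity. -/
def yc {W : WeierstrassCurve.Affine F} : W.Point → F
  | .zero => 0
  | @WeierstrassCurve.Affine.Point.some _ _ _ _ y _ => y

open Classical in
/-- The function `u_{A,B} = (y_A - y(A-B))/(x_A - x(A-B))`, evaluated at `P`: this is the
slope of the line (secant, or tangent in the degenerate case) through the points
`P - A` and `A - B` of the curve. -/
def uf (W : WeierstrassCurve.Affine F) (A B P : W.Point) : F :=
  W.slope (xc (P - A)) (xc (A - B)) (yc (P - A)) (yc (A - B))

/-- `Γ(A,B,C) = u_{A,B}(C)`. -/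
def Gam (W : WeierstrassCurve.Affine F) (A B C : W.Point) : F := uf W A B C

open WeierstrassCurve.Affine
open Classical

section Aux
variable {W : WeierstrassCurve.Affine F}

lemma xc_some {x y : F} (h : W.Nonsingular x y) : xc (Point.some _ _ h) = x := rfl
lemma yc_some {x y : F} (h : W.Nonsingular x y) : yc (Point.some _ _ h) = y := rfl

lemma exists_some {P : W.Point} (h : P ≠ 0) :
    ∃ x y, ∃ hn : W.Nonsingular x y, P = Point.some _ _ hn := by
  cases P with
  | zero => exact absurd Point.zero_def h
  | some _ _ hn => exact ⟨_, _, hn, rfl⟩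

lemma point_ext {P Q : W.Point} (hP : P ≠ 0) (hQ : Q ≠ 0)
    (hx : xc P = xc Q) (hy : yc P = yc Q) : P = Q := by
  obtain ⟨x₁, y₁, h₁, rfl⟩ := exists_some hP
  obtain ⟨x₂, y₂, h₂, rfl⟩ := exists_some hQ
  simp only [xc_some, yc_some] at hx hy
  subst hx; subst hy; rfl

lemma x_ne_of_ne {x₁ y₁ x₂ y₂ : F} (h₁ : W.Nonsingular x₁ y₁) (h₂ : W.Nonsingular x₂ y₂)
    (hne : Point.some _ _ h₁ ≠ Point.some _ _ h₂) (hne' : Point.some _ _ h₁ ≠ -Point.some _ _ h₂) :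
    x₁ ≠ x₂ := by
  intro hx
  rcases Y_eq_of_X_eq h₁.1 h₂.1 hx with hy | hy
  · subst hx; subst hy; exact hne rfl
  · subst hx; subst hy
    exact hne' (by rw [Point.neg_some])

lemma hom_add (f : F →+* F) (hWf : W.map f = W)
    (φ : W.Point → W.Point)
    (hx : ∀ P, xc (φ P) = f (xc P)) (hy : ∀ P, yc (φ P) = f (yc P))
    (h0 : ∀ P, φ P = 0 ↔ P = 0) :
    ∀ P Q : W.Point, φ (P + Q) = φ P + φ Q := by
  have hns : ∀ {x y : F}, W.Nonsingular x y → W.Nonsingular (f x) (f y) := by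
    intro x y h
    have := (W.map_nonsingular f.injective x y).mpr h
    rwa [hWf] at this
  have hz : φ 0 = 0 := (h0 0).mpr rfl
  have φsome : ∀ {x y : F} (h : W.Nonsingular x y),
      φ (Point.some _ _ h) = Point.some _ _ (hns h) := by
    intro x y h
    refine point_ext (fun hc => Point.some_ne_zero h ((h0 _).mp hc))
      (Point.some_ne_zero _) ?_ ?_
    · rw [hx, xc_some, xc_some]
    · rw [hy, yc_some, yc_some]
  have hnegY : ∀ x y : F, W.negY (f x) (f y) = f (W.negY x y) := by
    intro x y
    have := W.map_negY f x y
    rwa [hWf] at this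
  intro P Q
  by_cases hP : P = 0
  · subst hP; rw [zero_add, hz, zero_add]
  by_cases hQ : Q = 0
  · subst hQ; rw [add_zero, hz, add_zero]
  obtain ⟨x₁, y₁, h₁, rfl⟩ := exists_some hP
  obtain ⟨x₂, y₂, h₂, rfl⟩ := exists_some hQ
  by_cases hcase : x₁ = x₂ ∧ y₁ = W.negY x₂ y₂
  · obtain ⟨hx12, hy12⟩ := hcase
    rw [Point.add_of_Y_eq hx12 hy12, hz, φsome, φsome,
      Point.add_of_Y_eq (congrArg f hx12) (by rw [hy12, ← hnegY])]
  · have hxy : x₁ = x₂ → y₁ ≠ W.negY x₂ y₂ := fun hxx hyy => hcase ⟨hxx, hyy⟩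
    have hxy' : f x₁ = f x₂ → f y₁ ≠ W.negY (f x₂) (f y₂) := by
      intro hxx hyy
      exact hxy (f.injective hxx) (f.injective (by rwa [hnegY] at hyy))
    have hs := W.map_slope f x₁ x₂ y₁ y₂
    rw [hWf] at hs
    rw [Point.add_some (fun h => hxy h.1 h.2), φsome, φsome, φsome, Point.add_some (fun h => hxy' h.1 h.2)]
    have hax := W.map_addX f x₁ x₂ (W.slope x₁ x₂ y₁ y₂)
    rw [hWf] at hax
    have hay := W.map_addY f x₁ y₁ x₂ (W.slope x₁ x₂ y₁ y₂)
    rw [hWf] at hay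
    refine point_ext (Point.some_ne_zero _) (Point.some_ne_zero _) ?_ ?_
    · rw [xc_some, xc_some, hs, hax]
    · rw [yc_some, yc_some, hs, hay]


end Aux

lemma identC {W : WeierstrassCurve.Affine F} {X1 Y1 X2 Y2 L : F}
    (hl : L * (X1 - X2) = Y1 - Y2)
    (h4 : W.addX X1 X2 L ≠ X2) :
    (W.addY X1 X2 Y1 L - W.negY X2 Y2) / (W.addX X1 X2 L - X2) = -L - W.a₁ := by
  rw [div_eq_iff (sub_ne_zero.2 h4)]
  simp only [addY, negAddY, addX, negY]
  linear_combination hl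

lemma identA {W : WeierstrassCurve.Affine F} {X1 Y1 X2 Y2 X3 Y3 L M : F}
    (e1 : Y1 ^ 2 + W.a₁ * X1 * Y1 + W.a₃ * Y1 = X1 ^ 3 + W.a₂ * X1 ^ 2 + W.a₄ * X1 + W.a₆)
    (e2 : Y2 ^ 2 + W.a₁ * X2 * Y2 + W.a₃ * Y2 = X2 ^ 3 + W.a₂ * X2 ^ 2 + W.a₄ * X2 + W.a₆)
    (e3 : Y3 ^ 2 + W.a₁ * X3 * Y3 + W.a₃ * Y3 = X3 ^ 3 + W.a₂ * X3 ^ 2 + W.a₄ * X3 + W.a₆)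
    (hl : L * (X1 - X2) = Y1 - Y2) (hm : M * (X3 - X2) = Y3 - Y2)
    (h12 : X1 ≠ X2) (h32 : X3 ≠ X2) (h13 : X1 ≠ X3)
    (h45 : W.addX X1 X2 L ≠ W.addX X3 X2 M) :
    (W.addY X1 X2 Y1 L - W.negY (W.addX X3 X2 M) (W.addY X3 X2 Y3 M)) /
      (W.addX X1 X2 L - W.addX X3 X2 M)
    = (Y1 - W.negY X3 Y3) / (X1 - X3) - L + M := by
  have h13' : X1 - X3 ≠ 0 := sub_ne_zero.2 h13
  have key : (W.addY X1 X2 Y1 L - W.negY (W.addX X3 X2 M) (W.addY X3 X2 Y3 M)) * (X1 - X3)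
      = ((Y1 - W.negY X3 Y3) - (L - M) * (X1 - X3)) * (W.addX X1 X2 L - W.addX X3 X2 M) := by
    apply mul_left_cancel₀ (mul_ne_zero (sub_ne_zero.2 h12) (sub_ne_zero.2 h32))
    simp only [addY, negAddY, addX, negY]
    linear_combination (norm := ring1)
      (-L*X3 - M*X3 + L*X2 + M*X2 - X3*W.a₁ + X2*W.a₁) * e1 +
      (-L*X1 - M*X1 + L*X3 + M*X3 - X1*W.a₁ + X3*W.a₁) * e2 +
      (L*X1 + M*X1 - L*X2 - M*X2 + X1*W.a₁ - X2*W.a₁) * e3 +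
      (-L*M*X1*X3 - M^2*X1*X3 + L*M*X1*X2 + M^2*X1*X2 + L*M*X3*X2 + M^2*X3*X2 - L*M*X2^2 - M^2*X2^2 - L*X1*X3*W.a₁ + (-2)*M*X1*X3*W.a₁ + L*X1*X2*W.a₁ + (2)*M*X1*X2*W.a₁ + M*X3*X2*W.a₁ - M*X2^2*W.a₁ - X1*X3*W.a₁^2 + X1*X2*W.a₁^2 - Y1*L*X3 - Y2*L*X3 - Y1*M*X3 - Y2*M*X3 + Y1*L*X2 + Y2*L*X2 + Y1*M*X2 + Y2*M*X2 - Y1*X3*W.a₁ - Y2*X3*W.a₁ + Y1*X2*W.a₁ + Y2*X2*W.a₁ - L*X3*W.a₃ - M*X3*W.a₃ + L*X2*W.a₃ + M*X2*W.a₃ - X3*W.a₁*W.a₃ + X2*W.a₁*W.a₃) * hl +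
      (L^2*X1*X3 + L*M*X1*X3 - L^2*X1*X2 - L*M*X1*X2 - L^2*X3*X2 - L*M*X3*X2 + L^2*X2^2 + L*M*X2^2 + (2)*L*X1*X3*W.a₁ + M*X1*X3*W.a₁ - L*X1*X2*W.a₁ + (-2)*L*X3*X2*W.a₁ - M*X3*X2*W.a₁ + L*X2^2*W.a₁ + X1*X3*W.a₁^2 - X3*X2*W.a₁^2 + Y3*L*X1 + Y2*L*X1 + Y3*M*X1 + Y2*M*X1 - Y3*L*X2 - Y2*L*X2 - Y3*M*X2 - Y2*M*X2 + Y3*X1*W.a₁ + Y2*X1*W.a₁ - Y3*X2*W.a₁ - Y2*X2*W.a₁ + L*X1*W.a₃ + M*X1*W.a₃ - L*X2*W.a₃ - M*X2*W.a₃ + X1*W.a₁*W.a₃ - X2*W.a₁*W.a₃) * hm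
  rw [show (Y1 - W.negY X3 Y3) / (X1 - X3) - L + M
        = ((Y1 - W.negY X3 Y3) - (L - M) * (X1 - X3)) / (X1 - X3) by
      field_simp; ring,
    div_eq_div_iff (sub_ne_zero.2 h45) h13']
  exact key

lemma identB {W : WeierstrassCurve.Affine F} {X1 Y1 X2 Y2 L M : F}
    (e1 : Y1 ^ 2 + W.a₁ * X1 * Y1 + W.a₃ * Y1 = X1 ^ 3 + W.a₂ * X1 ^ 2 + W.a₄ * X1 + W.a₆)
    (e2 : Y2 ^ 2 + W.a₁ * X2 * Y2 + W.a₃ * Y2 = X2 ^ 3 + W.a₂ * X2 ^ 2 + W.a₄ * X2 + W.a₆)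
    (hl : L * (X1 - X2) = Y1 - Y2)
    (hm : M * (2 * Y2 + W.a₁ * X2 + W.a₃) = 3 * X2 ^ 2 + 2 * W.a₂ * X2 + W.a₄ - W.a₁ * Y2)
    (h12 : X1 ≠ X2) (hw : Y2 ≠ W.negY X2 Y2)
    (h45 : W.addX X1 X2 L ≠ W.addX X2 X2 M) :
    (W.addY X1 X2 Y1 L - W.negY (W.addX X2 X2 M) (W.addY X2 X2 Y2 M)) /
      (W.addX X1 X2 L - W.addX X2 X2 M)
    = (Y1 - W.negY X2 Y2) / (X1 - X2) - L + M := by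
  have h12' : X1 - X2 ≠ 0 := sub_ne_zero.2 h12
  have hw' : 2 * Y2 + W.a₁ * X2 + W.a₃ ≠ 0 := by
    intro h; apply hw; simp only [negY]; linear_combination h
  have key : (W.addY X1 X2 Y1 L - W.negY (W.addX X2 X2 M) (W.addY X2 X2 Y2 M)) * (X1 - X2)
      = ((Y1 - W.negY X2 Y2) - (L - M) * (X1 - X2)) * (W.addX X1 X2 L - W.addX X2 X2 M) := by
    apply mul_left_cancel₀
      (mul_ne_zero h12' (pow_ne_zero 2 hw'))
    simp only [addY, negAddY, addX, negY]
    linear_combination (norm := ring1)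
      (-L*X2^2*W.a₁^2 - X2^2*W.a₁^3 + (-4)*Y2*L*X2*W.a₁ + (-3)*X2^3*W.a₁ + (-3)*Y2*X2*W.a₁^2 + (-2)*X2^2*W.a₁*W.a₂ + (-2)*L*X2*W.a₁*W.a₃ + (-2)*X2*W.a₁^2*W.a₃ + (-4)*Y2^2*L + (-6)*Y2*X2^2 + (-2)*Y2^2*W.a₁ + (-4)*Y2*X2*W.a₂ + (-4)*Y2*L*W.a₃ + (-3)*X2^2*W.a₃ + (-3)*Y2*W.a₁*W.a₃ + (-2)*X2*W.a₂*W.a₃ - L*W.a₃^2 - W.a₁*W.a₃^2 - X2*W.a₁*W.a₄ + (-2)*Y2*W.a₄ - W.a₃*W.a₄) * e1 +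
      (L*X2^2*W.a₁^2 + X2^2*W.a₁^3 + (4)*Y2*L*X2*W.a₁ + (3)*X2^3*W.a₁ + (3)*Y2*X2*W.a₁^2 + (2)*X2^2*W.a₁*W.a₂ + (2)*L*X2*W.a₁*W.a₃ + (2)*X2*W.a₁^2*W.a₃ + (4)*Y2^2*L + (6)*Y2*X2^2 + (2)*Y2^2*W.a₁ + (4)*Y2*X2*W.a₂ + (4)*Y2*L*W.a₃ + (3)*X2^2*W.a₃ + (3)*Y2*W.a₁*W.a₃ + (2)*X2*W.a₂*W.a₃ + L*W.a₃^2 + W.a₁*W.a₃^2 + X2*W.a₁*W.a₄ + (2)*Y2*W.a₄ + W.a₃*W.a₄) * e2 +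
      (-L*X1*X2^2*W.a₁^3 - X1*X2^2*W.a₁^4 + (-3)*L*X1*X2^3*W.a₁ + (3)*L*X2^4*W.a₁ + (-3)*Y2*L*X1*X2*W.a₁^2 - Y1*L*X2^2*W.a₁^2 + (-2)*Y2*L*X2^2*W.a₁^2 + (-6)*X1*X2^3*W.a₁^2 + (3)*X2^4*W.a₁^2 + (-2)*Y2*X1*X2*W.a₁^3 - Y1*X2^2*W.a₁^3 + (-2)*Y2*X2^2*W.a₁^3 + (-2)*L*X1*X2^2*W.a₁*W.a₂ + (2)*L*X2^3*W.a₁*W.a₂ + (-4)*X1*X2^2*W.a₁^2*W.a₂ + (2)*X2^3*W.a₁^2*W.a₂ + (-2)*L*X1*X2*W.a₁^2*W.a₃ - L*X2^2*W.a₁^2*W.a₃ + (-2)*X1*X2*W.a₁^3*W.a₃ - X2^2*W.a₁^3*W.a₃ + (-6)*Y2*L*X1*X2^2 + (6)*Y2*L*X2^3 + (-9)*X1*X2^4 + (9)*X2^5 + (-2)*Y2^2*L*X1*W.a₁ + (-4)*Y1*Y2*L*X2*W.a₁ + (-6)*Y2^2*L*X2*W.a₁ + (-6)*Y2*X1*X2^2*W.a₁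 + (-3)*Y1*X2^3*W.a₁ + (-3)*Y2*X2^3*W.a₁ - Y2^2*X1*W.a₁^2 + (-3)*Y1*Y2*X2*W.a₁^2 + (-4)*Y2^2*X2*W.a₁^2 + (-4)*Y2*L*X1*X2*W.a₂ + (4)*Y2*L*X2^2*W.a₂ + (-12)*X1*X2^3*W.a₂ + (12)*X2^4*W.a₂ + (-4)*Y2*X1*X2*W.a₁*W.a₂ + (-2)*Y1*X2^2*W.a₁*W.a₂ + (-2)*Y2*X2^2*W.a₁*W.a₂ + (-4)*X1*X2^2*W.a₂^2 + (4)*X2^3*W.a₂^2 + (-3)*L*X1*X2^2*W.a₃ + (3)*L*X2^3*W.a₃ + (-3)*Y2*L*X1*W.a₁*W.a₃ + (-2)*Y1*L*X2*W.a₁*W.a₃ + (-7)*Y2*L*X2*W.a₁*W.a₃ + (-6)*X1*X2^2*W.a₁*W.a₃ + (-2)*Y2*X1*W.a₁^2*W.a₃ + (-2)*Y1*X2*W.a₁^2*W.a₃ + (-6)*Y2*X2*W.a₁^2*W.a₃ + (-2)*L*X1*X2*W.a₂*W.a₃ + (2)*L*X2^2*W.a₂*W.a₃ + (-4)*X1*X2*W.a₁*W.a₂*W.a₃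 - L*X1*W.a₁*W.a₃^2 + (-2)*L*X2*W.a₁*W.a₃^2 - X1*W.a₁^2*W.a₃^2 + (-2)*X2*W.a₁^2*W.a₃^2 - L*X1*X2*W.a₁*W.a₄ + L*X2^2*W.a₁*W.a₄ + (-2)*X1*X2*W.a₁^2*W.a₄ + X2^2*W.a₁^2*W.a₄ + (-4)*Y1*Y2^2*L + (-4)*Y2^3*L + (-6)*Y1*Y2*X2^2 + (-6)*Y2^2*X2^2 + (-2)*Y1*Y2^2*W.a₁ + (-2)*Y2^3*W.a₁ + (-4)*Y1*Y2*X2*W.a₂ + (-4)*Y2^2*X2*W.a₂ + (-4)*Y1*Y2*L*W.a₃ + (-8)*Y2^2*L*W.a₃ + (-3)*Y1*X2^2*W.a₃ + (-9)*Y2*X2^2*W.a₃ + (-3)*Y1*Y2*W.a₁*W.a₃ + (-5)*Y2^2*W.a₁*W.a₃ + (-2)*Y1*X2*W.a₂*W.a₃ + (-6)*Y2*X2*W.a₂*W.a₃ - Y1*L*W.a₃^2 + (-5)*Y2*L*W.a₃^2 + (-3)*X2^2*W.a₃^2 - Y1*W.a₁*W.a₃^2 + (-4)*Y2*W.a₁*W.a₃^2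 + (-2)*X2*W.a₂*W.a₃^2 - L*W.a₃^3 - W.a₁*W.a₃^3 + (-2)*Y2*L*X1*W.a₄ + (2)*Y2*L*X2*W.a₄ + (-6)*X1*X2^2*W.a₄ + (6)*X2^3*W.a₄ + (-2)*Y2*X1*W.a₁*W.a₄ - Y1*X2*W.a₁*W.a₄ - Y2*X2*W.a₁*W.a₄ + (-4)*X1*X2*W.a₂*W.a₄ + (4)*X2^2*W.a₂*W.a₄ - L*X1*W.a₃*W.a₄ + L*X2*W.a₃*W.a₄ + (-2)*X1*W.a₁*W.a₃*W.a₄ + (-2)*Y1*Y2*W.a₄ + (-2)*Y2^2*W.a₄ - Y1*W.a₃*W.a₄ + (-3)*Y2*W.a₃*W.a₄ - W.a₃^2*W.a₄ - X1*W.a₄^2 + X2*W.a₄^2) * hl +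
      (-L^2*X1^2*X2*W.a₁ - L*M*X1^2*X2*W.a₁ + (2)*L^2*X1*X2^2*W.a₁ + (2)*L*M*X1*X2^2*W.a₁ - L^2*X2^3*W.a₁ - L*M*X2^3*W.a₁ + (-2)*L*X1^2*X2*W.a₁^2 + (4)*L*X1*X2^2*W.a₁^2 + M*X1*X2^2*W.a₁^2 + (-2)*L*X2^3*W.a₁^2 - M*X2^3*W.a₁^2 + X1*X2^2*W.a₁^3 - X2^3*W.a₁^3 + (-2)*Y2*L^2*X1^2 + (-2)*Y2*L*M*X1^2 + (4)*Y2*L^2*X1*X2 + (4)*Y2*L*M*X1*X2 + (-2)*Y2*L^2*X2^2 + (-2)*Y2*L*M*X2^2 + (-3)*L*X1^2*X2^2 + (6)*L*X1*X2^3 + (-3)*L*X2^4 + (-3)*Y2*L*X1^2*W.a₁ + (6)*Y2*L*X1*X2*W.a₁ + Y1*M*X1*X2*W.a₁ + (3)*Y2*M*X1*X2*W.a₁ + X1^3*X2*W.a₁ + (-3)*Y2*L*X2^2*W.a₁ - Y1*M*X2^2*W.a₁ + (-3)*Y2*M*X2^2*W.a₁ - X2^4*W.a₁ + Y1*X1*X2*W.a₁^2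 + (2)*Y2*X1*X2*W.a₁^2 - Y1*X2^2*W.a₁^2 + (-2)*Y2*X2^2*W.a₁^2 + (-2)*L*X1^2*X2*W.a₂ + (4)*L*X1*X2^2*W.a₂ + (-2)*L*X2^3*W.a₂ + X1^2*X2*W.a₁*W.a₂ - X2^3*W.a₁*W.a₂ - L^2*X1^2*W.a₃ - L*M*X1^2*W.a₃ + (2)*L^2*X1*X2*W.a₃ + (2)*L*M*X1*X2*W.a₃ - L^2*X2^2*W.a₃ - L*M*X2^2*W.a₃ + (-2)*L*X1^2*W.a₁*W.a₃ + (4)*L*X1*X2*W.a₁*W.a₃ + (2)*M*X1*X2*W.a₁*W.a₃ + (-2)*L*X2^2*W.a₁*W.a₃ + (-2)*M*X2^2*W.a₁*W.a₃ + (2)*X1*X2*W.a₁^2*W.a₃ + (-2)*X2^2*W.a₁^2*W.a₃ + (2)*Y1*Y2*M*X1 + (2)*Y2^2*M*X1 + (2)*Y2*X1^3 + (-2)*Y1*Y2*M*X2 + (-2)*Y2^2*M*X2 + (3)*Y1*X1*X2^2 + (-3)*Y2*X1*X2^2 + (-3)*Y1*X2^3 + Y2*X2^3 + Y1*Y2*X1*W.a₁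 + Y2^2*X1*W.a₁ - Y1*Y2*X2*W.a₁ - Y2^2*X2*W.a₁ + (2)*Y2*X1^2*W.a₂ + (2)*Y1*X1*X2*W.a₂ + (-2)*Y2*X1*X2*W.a₂ + (-2)*Y1*X2^2*W.a₂ + Y1*M*X1*W.a₃ + (3)*Y2*M*X1*W.a₃ + X1^3*W.a₃ - Y1*M*X2*W.a₃ + (-3)*Y2*M*X2*W.a₃ - X2^3*W.a₃ + Y1*X1*W.a₁*W.a₃ + (2)*Y2*X1*W.a₁*W.a₃ - Y1*X2*W.a₁*W.a₃ + (-2)*Y2*X2*W.a₁*W.a₃ + X1^2*W.a₂*W.a₃ - X2^2*W.a₂*W.a₃ + M*X1*W.a₃^2 - M*X2*W.a₃^2 + X1*W.a₁*W.a₃^2 - X2*W.a₁*W.a₃^2 - L*X1^2*W.a₄ + (2)*L*X1*X2*W.a₄ - L*X2^2*W.a₄ + X1*X2*W.a₁*W.a₄ - X2^2*W.a₁*W.a₄ + Y1*X1*W.a₄ + Y2*X1*W.a₄ - Y1*X2*W.a₄ - Y2*X2*W.a₄ + X1*W.a₃*W.a₄ - X2*W.a₃*W.a₄) * hm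

  rw [show (Y1 - W.negY X2 Y2) / (X1 - X2) - L + M
        = ((Y1 - W.negY X2 Y2) - (L - M) * (X1 - X2)) / (X1 - X2) by
      field_simp; ring,
    div_eq_div_iff (sub_ne_zero.2 h45) h12']
  exact key



open Classical in
/-- action of the `q`-Frobenius `Φ : x ↦ x^q` on the elliptic basis:
`Φ(ω_k) = ω_{k-1} - ω_{-1} + Γ_{-1,k-1}` for `k ≢ 0, 1`, `Φ(ω₁) = -ω_{-1} - a₁`, and
`Φ(ω₀) = ω₀`, where `Γ_{k,l} = Γ(O, kt, lt)`. -/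
theorem frobenius_on_omega {K L : Type*} [Field K] [Fintype K] [Field L] [Algebra K L]
    (d : ℕ) (hd : 2 ≤ d) (hrank : Module.finrank K L = d)
    (W : WeierstrassCurve.Affine L)
    (hW : W.a₁ ^ Fintype.card K = W.a₁ ∧ W.a₂ ^ Fintype.card K = W.a₂ ∧
      W.a₃ ^ Fintype.card K = W.a₃ ∧ W.a₄ ^ Fintype.card K = W.a₄ ∧
      W.a₆ ^ Fintype.card K = W.a₆)
    (φ : W.Point → W.Point)
    (hφ : ∀ P : W.Point, xc (φ P) = xc P ^ Fintype.card K ∧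
      yc (φ P) = yc P ^ Fintype.card K ∧ (φ P = 0 ↔ P = 0))
    (t : W.Point) (ht : addOrderOf t = d) (htK : φ t = t)
    (b : W.Point) (hb : φ b = b + t) (hbd : d • b ≠ 0)
    (ω : ZMod d → L)
    (hω : ∀ k : ZMod d, ω k = if k = 0 then 1 else uf W 0 (k.val • t) b) :
    (∀ k : ZMod d, k ≠ 0 → k ≠ 1 →
        ω k ^ Fintype.card K =
          ω (k - 1) - ω (-1) + Gam W 0 ((-1 : ZMod d).val • t) ((k - 1).val • t)) ∧
      ω 1 ^ Fintype.card K = -ω (-1) - W.a₁ ∧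
      ω 0 ^ Fintype.card K = ω 0 := by
  classical
  obtain ⟨hW1, hW2, hW3, hW4, hW6⟩ := hW
  haveI : NeZero d := ⟨by omega⟩
  haveI : Fact (1 < d) := ⟨by omega⟩
  set q := Fintype.card K with hq
  -- the Frobenius ring homomorphism
  haveI hp' : CharP K (ringChar K) := ringChar.charP K
  set p := ringChar K with hpdef
  haveI : CharP L p := charP_of_injective_algebraMap (algebraMap K L).injective p
  obtain ⟨n, hprime, hcard⟩ := FiniteField.card K p
  haveI : ExpChar L p := ExpChar.prime hprime
  set f : L →+* L := iterateFrobenius L p n with hfdef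
  have hf : ∀ x : L, f x = x ^ q := by
    intro x
    rw [hfdef, iterateFrobenius_def, ← hcard]
  have hWf : W.map f = W := by
    ext <;> simp [WeierstrassCurve.map, hf, hW1, hW2, hW3, hW4, hW6]
  have hφx : ∀ P, xc (φ P) = f (xc P) := fun P => by rw [hf]; exact (hφ P).1
  have hφy : ∀ P, yc (φ P) = f (yc P) := fun P => by rw [hf]; exact (hφ P).2.1
  have hφ0 : ∀ P : W.Point, φ P = 0 ↔ P = 0 := fun P => (hφ P).2.2
  have hadd := hom_add f hWf φ hφx hφy hφ0
  have hz : φ 0 = 0 := (hφ0 0).mpr rfl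
  have hneg : ∀ P, φ (-P) = -φ P := by
    intro P
    have h := hadd P (-P)
    rw [add_neg_cancel, hz] at h
    exact eq_neg_of_add_eq_zero_right h.symm
  have hmul : ∀ m : ℕ, φ (m • t) = m • t := by
    intro m
    induction m with
    | zero => simpa using hz
    | succ m ih => rw [succ_nsmul, hadd, ih, htK]
  -- basic facts about t and b
  have ht0 : t ≠ 0 := by intro h; rw [h, addOrderOf_zero] at ht; omega
  have hdt : d • t = 0 := by rw [← ht]; exact addOrderOf_nsmul_eq_zero t
  have hmod : ∀ m : ℕ, m • t = (m % d) • t := by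
    intro m
    conv_lhs => rw [← Nat.mod_add_div m d]
    rw [add_nsmul, mul_comm d (m / d), mul_smul, hdt, smul_zero, add_zero]
  have hsmul_ne : ∀ m : ℕ, m % d ≠ 0 → m • t ≠ 0 := by
    intro m hm h
    rw [hmod] at h
    have hdvd := addOrderOf_dvd_of_nsmul_eq_zero h
    rw [ht] at hdvd
    exact hm (Nat.eq_zero_of_dvd_of_lt hdvd (Nat.mod_lt _ (by omega)))
  have hvlt : ∀ j : ZMod d, j.val % d = j.val := fun j => Nat.mod_eq_of_lt (ZMod.val_lt j)
  have hMne : ∀ j : ZMod d, j ≠ 0 → j.val • t ≠ 0 := by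
    intro j hj
    apply hsmul_ne
    rw [hvlt]
    exact fun h => hj (ZMod.val_eq_zero j |>.mp h)
  have hvaladd : ∀ j₁ j₂ : ZMod d, (j₁ + j₂).val • t = j₁.val • t + j₂.val • t := by
    intro j₁ j₂
    rw [← add_nsmul, hmod (j₁.val + j₂.val), ← ZMod.val_add]
  have hMinj : ∀ j₁ j₂ : ZMod d, j₁.val • t = j₂.val • t → j₁ = j₂ := by
    intro j₁ j₂ h
    have h2 : (j₁ - j₂).val • t + j₂.val • t = j₂.val • t + 0 := by
      rw [← hvaladd, sub_add_cancel, h, add_zero]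
    have h3 : (j₁ - j₂).val • t = 0 := by
      have := add_right_cancel (h2.trans (add_comm _ _))
      exact this
    by_contra hne
    exact hMne (j₁ - j₂) (sub_ne_zero.2 hne) h3
  have hone : ((1 : ZMod d)).val • t = t := by rw [ZMod.val_one, one_nsmul]
  have hneg1 : ((-1 : ZMod d)).val • t = -t := by
    have h := hvaladd (-1) 1
    rw [neg_add_cancel, ZMod.val_zero, zero_nsmul, hone] at h
    exact eq_neg_of_add_eq_zero_left h.symm
  have hb0 : b ≠ 0 := by
    intro h
    apply ht0
    have h2 := hb
    rw [h, hz, zero_add] at h2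
    exact h2.symm
  have hbne : ∀ m : ℕ, b ≠ m • t := by
    intro m h
    apply hbd
    rw [h, ← mul_smul, mul_comm, mul_smul, hdt, smul_zero]
  have hbnegne : ∀ m : ℕ, b ≠ -(m • t) := by
    intro m h
    apply hbd
    rw [h, smul_neg, ← mul_smul, mul_comm, mul_smul, hdt, smul_zero, neg_zero]
  -- slope and Frobenius
  have hslope : ∀ x₁ x₂ y₁ y₂ : L,
      (W.slope x₁ x₂ y₁ y₂) ^ q = W.slope (x₁ ^ q) (x₂ ^ q) (y₁ ^ q) (y₂ ^ q) := by
    intro x₁ x₂ y₁ y₂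
    have h := W.map_slope f x₁ x₂ y₁ y₂
    rw [hWf] at h
    simp only [← hf]
    exact h.symm
  have hfrob : ∀ A C : W.Point, (W.slope (xc A) (xc C) (yc A) (yc C)) ^ q
      = W.slope (xc (φ A)) (xc (φ C)) (yc (φ A)) (yc (φ C)) := by
    intro A C
    rw [hslope, (hφ A).1, (hφ A).2.1, (hφ C).1, (hφ C).2.1]
  -- coordinates
  obtain ⟨X2, Y2, h₂, ht2⟩ := exists_some ht0
  obtain ⟨X1, Y1, h₁, hb1⟩ := exists_some hb0
  have hnegt : -t = Point.some _ _ ((nonsingular_neg ..).mpr h₂) := by rw [ht2, Point.neg_some]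
  have hx12 : X1 ≠ X2 := by
    apply x_ne_of_ne h₁ h₂
    · rw [← hb1, ← ht2]
      intro h
      exact hbne 1 (by rw [one_nsmul, ← h])
    · rw [← hb1, ← ht2]
      intro h
      exact hbnegne 1 (by rw [one_nsmul, ← h])
  have hsl : W.slope X1 X2 Y1 Y2 = (Y1 - Y2) / (X1 - X2) := slope_of_X_ne hx12
  have hl : (Y1 - Y2) / (X1 - X2) * (X1 - X2) = Y1 - Y2 :=
    div_mul_cancel₀ _ (sub_ne_zero.2 hx12)
  have hbt : b + t = Point.some _ _ (nonsingular_add h₁ h₂ fun h => absurd h.1 hx12) := by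
    rw [hb1, ht2, Point.add_of_X_ne hx12]
  refine ⟨?_, ?_, ?_⟩
  · -- main case
    intro k hk0 hk1
    have e1 := (W.equation_iff X1 Y1).mp h₁.1
    have e2 := (W.equation_iff X2 Y2).mp h₂.1
    have hksub : k - 1 ≠ 0 := sub_ne_zero.2 hk1
    have hkval : k.val • t = (k - 1).val • t + t := by
      have h := hvaladd (k - 1) 1
      rwa [sub_add_cancel, hone] at h
    have hS0 : k.val • t ≠ 0 := hMne k hk0
    have hm1ne : (-1 : ZMod d) ≠ 0 := fun h => one_ne_zero (neg_eq_zero.mp h)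
    rw [hω k, if_neg hk0, hω (k - 1), if_neg hksub, hω (-1), if_neg hm1ne]
    simp only [uf, Gam, sub_zero, zero_sub]
    rw [hneg1, neg_neg]
    rw [hfrob b (-(k.val • t)), hb, hneg, hmul k.val]
    by_cases hk2 : k - 1 = 1
    · -- tangent case
      rw [hk2, hone]
      have h2t : k.val • t = t + t := by rw [hkval, hk2, hone]
      have hy2 : Y2 ≠ W.negY X2 Y2 := by
        intro h
        apply hS0
        rw [h2t, ht2]
        exact Point.add_of_Y_eq rfl h
      have hsm : W.slope X2 X2 Y2 Y2
          = (3 * X2 ^ 2 + 2 * W.a₂ * X2 + W.a₄ - W.a₁ * Y2) / (Y2 - W.negY X2 Y2) :=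
        slope_of_Y_ne rfl hy2
      have hwden : Y2 - W.negY X2 Y2 = 2 * Y2 + W.a₁ * X2 + W.a₃ := by
        simp only [negY]; ring
      have hm : (3 * X2 ^ 2 + 2 * W.a₂ * X2 + W.a₄ - W.a₁ * Y2) / (Y2 - W.negY X2 Y2)
            * (2 * Y2 + W.a₁ * X2 + W.a₃)
          = 3 * X2 ^ 2 + 2 * W.a₂ * X2 + W.a₄ - W.a₁ * Y2 := by
        rw [← hwden, div_mul_cancel₀ _ (sub_ne_zero.2 hy2)]
      have hSsome : k.val • t = Point.some _ _ (nonsingular_add h₂ h₂ fun h => hy2 h.2) := by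
        rw [h2t, ht2, Point.add_self_of_Y_ne hy2]
      have hbt2t : b + t ≠ k.val • t := by
        rw [h2t]
        intro h
        exact hbne 1 (by rw [one_nsmul]; exact add_right_cancel h)
      have hbtn2t : b + t ≠ -(k.val • t) := by
        rw [h2t]
        intro h
        apply hbnegne 3
        rw [show (3 : ℕ) • t = t + t + t by rw [succ_nsmul, two_nsmul], neg_add,
          ← sub_eq_add_neg]
        exact eq_sub_of_add_eq h
      have h45 : W.addX X1 X2 (W.slope X1 X2 Y1 Y2) ≠ W.addX X2 X2 (W.slope X2 X2 Y2 Y2) := by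
        apply x_ne_of_ne (nonsingular_add h₁ h₂ fun h => absurd h.1 hx12)
          (nonsingular_add h₂ h₂ fun h => hy2 h.2)
        · rw [← hbt, ← hSsome]; exact hbt2t
        · rw [← hbt, ← hSsome]; exact hbtn2t
      rw [hbt, hSsome, hb1, ht2]
      simp only [Point.neg_some, xc_some, yc_some]
      rw [hsl, hsm] at h45 ⊢
      rw [slope_of_X_ne h45, slope_of_X_ne hx12]
      exact identB e1 e2 hl hm hx12 hy2 h45
    · -- generic case
      have hR0 : (k - 1).val • t ≠ 0 := hMne _ hksub
      obtain ⟨X3, Y3, h₃, hR⟩ := exists_some hR0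
      have e3 := (W.equation_iff X3 Y3).mp h₃.1
      have hRnet : Point.some _ _ h₃ ≠ Point.some _ _ h₂ := by
        rw [← hR, ← ht2]
        intro h
        exact hk2 (hMinj (k - 1) 1 (by rw [h, hone]))
      have hRnegt : Point.some _ _ h₃ ≠ -Point.some _ _ h₂ := by
        rw [← hR, ← ht2]
        intro h
        apply hS0
        rw [hkval, h, neg_add_cancel]
      have hx32 : X3 ≠ X2 := x_ne_of_ne h₃ h₂ hRnet hRnegt
      have hsm : W.slope X3 X2 Y3 Y2 = (Y3 - Y2) / (X3 - X2) := slope_of_X_ne hx32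
      have hm : (Y3 - Y2) / (X3 - X2) * (X3 - X2) = Y3 - Y2 :=
        div_mul_cancel₀ _ (sub_ne_zero.2 hx32)
      have hx13 : X1 ≠ X3 := by
        apply x_ne_of_ne h₁ h₃
        · rw [← hb1, ← hR]; exact hbne _
        · rw [← hb1, ← hR]; exact hbnegne _
      have hSsome : k.val • t = Point.some _ _ (nonsingular_add h₃ h₂ fun h => absurd h.1 hx32) := by
        rw [hkval, hR, ht2, Point.add_of_X_ne hx32]
      have hbtS : b + t ≠ k.val • t := by
        intro h
        rw [hkval] at h
        exact hbne _ (add_right_cancel h)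
      have hbtnS : b + t ≠ -(k.val • t) := by
        intro h
        apply hbnegne (k.val + 1)
        rw [succ_nsmul, neg_add, ← sub_eq_add_neg]
        exact eq_sub_of_add_eq h
      have h45 : W.addX X1 X2 (W.slope X1 X2 Y1 Y2) ≠ W.addX X3 X2 (W.slope X3 X2 Y3 Y2) := by
        apply x_ne_of_ne (nonsingular_add h₁ h₂ fun h => absurd h.1 hx12)
          (nonsingular_add h₃ h₂ fun h => absurd h.1 hx32)
        · rw [← hbt, ← hSsome]; exact hbtS
        · rw [← hbt, ← hSsome]; exact hbtnS
      rw [hbt, hSsome, hb1, hR, ht2]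
      simp only [Point.neg_some, xc_some, yc_some]
      rw [hsl, hsm] at h45 ⊢
      rw [slope_of_X_ne h45, slope_of_X_ne hx13]
      exact identA e1 e2 e3 hl hm hx12 hx32 hx13 h45
  · -- ω 1
    have hm1ne : (-1 : ZMod d) ≠ 0 := fun h => one_ne_zero (neg_eq_zero.mp h)
    rw [hω 1, if_neg one_ne_zero, hω (-1), if_neg hm1ne]
    simp only [uf, sub_zero, zero_sub]
    rw [hone, hneg1, neg_neg]
    rw [hfrob b (-t), hb, hneg, htK]
    have hbtne1 : b + t ≠ -t := by
      intro h
      apply hbnegne 2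
      rw [two_nsmul, neg_add, ← sub_eq_add_neg]
      exact eq_sub_of_add_eq h
    have hbtne2 : b + t ≠ t := by
      intro h
      exact hb0 (add_eq_right.mp h)
    have h45x : W.addX X1 X2 (W.slope X1 X2 Y1 Y2) ≠ X2 := by
      apply x_ne_of_ne (nonsingular_add h₁ h₂ fun h => absurd h.1 hx12) ((nonsingular_neg ..).mpr h₂)
      · rw [← hbt, ← hnegt]; exact hbtne1
      · rw [← hbt, ← hnegt, neg_neg]; exact hbtne2
    rw [hbt, hb1, ht2]
    simp only [Point.neg_some, xc_some, yc_some]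
    rw [hsl] at h45x ⊢
    rw [slope_of_X_ne h45x]
    exact identC hl h45x
  · rw [hω 0, if_pos rfl, one_pow]


end EllipticPeriods
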